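/- Let V be the ℂ-vector space with basis {Q_n, R_n : n ∈ ℤ} and, for a parameter z ∈ ℂ, define the alternating trilinear bracket on V by: [Q_k, Q_m, Q_n] = (k−m)(m−n)(k−n) R_{k+m+n}; [Q_p, Q_q, R_k] = (p−q)(Q_{k+p+q} + z·k·R_{k+p+q}); [Q_p, R_q, R_k] = (k−q) R_{k+p+q}; [R_p, R_q, R_k] = 0, for all k, m, n, p, q ∈ ℤ. Then this bracket satisfies the Fundamental Identity [[x1,x2,x3],y2,y3] = [[x1,y2,y3],x2,x3] + [x1,[x2,y2,y3],x3] + [x1,x2,[x3,y2,y3]] for all elements of V if and only if z = 2√−1 or z = −2√−1 (equivalently z² = −4). In these cases (V, [·,·,·]) is the 3-Virasoro-Witt 3-Lie algebra W₃. -/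

import Mathlib

noncomputable section

namespace W3

/-- The ℂ-vector space with basis `{Q_n, R_n : n ∈ ℤ}`, realized as finitely
supported functions on `ℤ ⊕ ℤ` (`inl n ↦ Q_n`, `inr n ↦ R_n`). -/
abbrev V : Type := (ℤ ⊕ ℤ) →₀ ℂ

/-- The basis vector `Q_n`. -/
def Qb (n : ℤ) : V := Finsupp.single (Sum.inl n) 1

/-- The basis vector `R_n`. -/
def Rb (n : ℤ) : V := Finsupp.single (Sum.inr n) 1

/-- The values of the bracket on basis elements (extended skew-symmetrically from
the defining relations):
`[Q_k,Q_m,Q_n] = (k−m)(m−n)(k−n) R_{k+m+n}`,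
`[Q_p,Q_q,R_k] = (p−q)(Q_{k+p+q} + z·k·R_{k+p+q})`,
`[Q_p,R_q,R_k] = (k−q) R_{k+p+q}`, `[R_p,R_q,R_k] = 0`. -/
def br0 (z : ℂ) : ℤ ⊕ ℤ → ℤ ⊕ ℤ → ℤ ⊕ ℤ → V
  | Sum.inl k, Sum.inl m, Sum.inl n =>
      (((k - m) * (m - n) * (k - n) : ℤ) : ℂ) • Rb (k + m + n)
  | Sum.inl p, Sum.inl q, Sum.inr k =>
      ((p - q : ℤ) : ℂ) • (Qb (k + p + q) + (z * k) • Rb (k + p + q))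
  | Sum.inl p, Sum.inr k, Sum.inl q =>
      -(((p - q : ℤ) : ℂ) • (Qb (k + p + q) + (z * k) • Rb (k + p + q)))
  | Sum.inr k, Sum.inl p, Sum.inl q =>
      ((p - q : ℤ) : ℂ) • (Qb (k + p + q) + (z * k) • Rb (k + p + q))
  | Sum.inl p, Sum.inr q, Sum.inr k => ((k - q : ℤ) : ℂ) • Rb (k + p + q)
  | Sum.inr q, Sum.inl p, Sum.inr k => -(((k - q : ℤ) : ℂ) • Rb (k + p + q))
  | Sum.inr q, Sum.inr k, Sum.inl p => ((k - q : ℤ) : ℂ) • Rb (k + p + q)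
  | Sum.inr _, Sum.inr _, Sum.inr _ => 0

/-- The trilinear extension of `br0` to all of `V`. -/
def br (z : ℂ) (x y w : V) : V :=
  Finsupp.sum x fun α a => Finsupp.sum y fun β b => Finsupp.sum w fun γ c =>
    (a * b * c) • br0 z α β γ

lemma br_zero_left (z : ℂ) (y w : V) : br z 0 y w = 0 := by
  simp [br]

lemma br_zero_mid (z : ℂ) (x w : V) : br z x 0 w = 0 := by
  simp [br]

lemma br_zero_right (z : ℂ) (x y : V) : br z x y 0 = 0 := by
  simp [br]

lemma br_add_left (z : ℂ) (x x' y w : V) :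
    br z (x + x') y w = br z x y w + br z x' y w := by
  unfold br
  rw [Finsupp.sum_add_index']
  · intro α; simp
  · intro α a a'; simp [add_mul, add_smul, Finsupp.sum_add]

lemma br_add_mid (z : ℂ) (x y y' w : V) :
    br z x (y + y') w = br z x y w + br z x y' w := by
  unfold br
  rw [← Finsupp.sum_add]
  apply Finsupp.sum_congr
  intro α _
  rw [Finsupp.sum_add_index']
  · intro β; simp
  · intro β b b'; simp [mul_add, add_mul, add_smul, Finsupp.sum_add]

lemma br_add_right (z : ℂ) (x y w w' : V) :
    br z x y (w + w') = br z x y w + br z x y w' := by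
  unfold br
  rw [← Finsupp.sum_add]
  apply Finsupp.sum_congr
  intro α _
  rw [← Finsupp.sum_add]
  apply Finsupp.sum_congr
  intro β _
  rw [Finsupp.sum_add_index']
  · intro γ; simp
  · intro γ c c'; simp [mul_add, add_smul]

lemma br_smul_left (z : ℂ) (c : ℂ) (x y w : V) :
    br z (c • x) y w = c • br z x y w := by
  unfold br
  rw [Finsupp.sum_smul_index']
  · rw [Finsupp.smul_sum]
    apply Finsupp.sum_congr
    intro α _
    rw [Finsupp.smul_sum]
    apply Finsupp.sum_congr
    intro β _
    rw [Finsupp.smul_sum]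
    apply Finsupp.sum_congr
    intro γ _
    simp only [smul_eq_mul, smul_smul]; congr 1; ring
  · intro α; simp

lemma br_smul_mid (z : ℂ) (c : ℂ) (x y w : V) :
    br z x (c • y) w = c • br z x y w := by
  unfold br
  rw [Finsupp.smul_sum]
  apply Finsupp.sum_congr
  intro α _
  rw [Finsupp.sum_smul_index']
  · rw [Finsupp.smul_sum]
    apply Finsupp.sum_congr
    intro β _
    rw [Finsupp.smul_sum]
    apply Finsupp.sum_congr
    intro γ _
    simp only [smul_eq_mul, smul_smul]; congr 1; ring
  · intro β; simp

lemma br_smul_right (z : ℂ) (c : ℂ) (x y w : V) :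
    br z x y (c • w) = c • br z x y w := by
  unfold br
  rw [Finsupp.smul_sum]
  apply Finsupp.sum_congr
  intro α _
  rw [Finsupp.smul_sum]
  apply Finsupp.sum_congr
  intro β _
  rw [Finsupp.sum_smul_index']
  · rw [Finsupp.smul_sum]
    apply Finsupp.sum_congr
    intro γ _
    simp only [smul_eq_mul, smul_smul]; congr 1; ring
  · intro γ; simp

lemma br_single (z : ℂ) (α β γ : ℤ ⊕ ℤ) (a b c : ℂ) :
    br z (Finsupp.single α a) (Finsupp.single β b) (Finsupp.single γ c)
      = (a * b * c) • br0 z α β γ := by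
  unfold br
  rw [Finsupp.sum_single_index, Finsupp.sum_single_index, Finsupp.sum_single_index]
  · simp
  · simp [Finsupp.sum_single_index]
  · simp [Finsupp.sum_single_index]

def e (α : ℤ ⊕ ℤ) : V := Finsupp.single α 1

lemma br_eee (z : ℂ) (α β γ : ℤ ⊕ ℤ) : br z (e α) (e β) (e γ) = br0 z α β γ := by
  simp [e, br_single]

lemma br_neg_left (z : ℂ) (x y w : V) : br z (-x) y w = -br z x y w := by
  rw [show -x = (-1 : ℂ) • x by simp, br_smul_left]; simp

lemma br_neg_mid (z : ℂ) (x y w : V) : br z x (-y) w = -br z x y w := by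
  rw [show -y = (-1 : ℂ) • y by simp, br_smul_mid]; simp

lemma br_neg_right (z : ℂ) (x y w : V) : br z x y (-w) = -br z x y w := by
  rw [show -w = (-1 : ℂ) • w by simp, br_smul_right]; simp

lemma Qb_e (n : ℤ) : Qb n = e (Sum.inl n) := rfl
lemma Rb_e (n : ℤ) : Rb n = e (Sum.inr n) := rfl

lemma FI_all (z : ℂ)
    (h : ∀ α1 α2 α3 α4 α5 : ℤ ⊕ ℤ,
      br z (br z (e α1) (e α2) (e α3)) (e α4) (e α5)
        = br z (br z (e α1) (e α4) (e α5)) (e α2) (e α3)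
          + br z (e α1) (br z (e α2) (e α4) (e α5)) (e α3)
          + br z (e α1) (e α2) (br z (e α3) (e α4) (e α5))) :
    ∀ x1 x2 x3 y2 y3 : V,
      br z (br z x1 x2 x3) y2 y3
        = br z (br z x1 y2 y3) x2 x3 + br z x1 (br z x2 y2 y3) x3
          + br z x1 x2 (br z x3 y2 y3) := by
  intro x1 x2 x3 y2 y3
  induction x1 using Finsupp.induction_linear generalizing x2 x3 y2 y3 with
  | zero => simp [br_zero_left]
  | add f g hf hg =>
      simp only [br_add_left, br_add_mid, br_add_right]
      rw [hf, hg]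
      abel
  | single a1 b1 =>
  induction x2 using Finsupp.induction_linear generalizing x3 y2 y3 with
  | zero => simp [br_zero_left, br_zero_mid]
  | add f g hf hg =>
      simp only [br_add_left, br_add_mid, br_add_right]
      rw [hf, hg]
      abel
  | single a2 b2 =>
  induction x3 using Finsupp.induction_linear generalizing y2 y3 with
  | zero => simp [br_zero_left, br_zero_mid, br_zero_right]
  | add f g hf hg =>
      simp only [br_add_left, br_add_mid, br_add_right]
      rw [hf, hg]
      abel
  | single a3 b3 =>
  induction y2 using Finsupp.induction_linear generalizing y3 with
  | zero => simp [br_zero_left, br_zero_mid, br_zero_right]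
  | add f g hf hg =>
      simp only [br_add_left, br_add_mid, br_add_right]
      rw [hf, hg]
      abel
  | single a4 b4 =>
  induction y3 using Finsupp.induction_linear with
  | zero => simp [br_zero_left, br_zero_mid, br_zero_right]
  | add f g hf hg =>
      simp only [br_add_left, br_add_mid, br_add_right]
      rw [hf, hg]
      abel
  | single a5 b5 =>
      rw [show (Finsupp.single a1 b1 : V) = b1 • e a1 by simp [e, Finsupp.smul_single],
          show (Finsupp.single a2 b2 : V) = b2 • e a2 by simp [e, Finsupp.smul_single],
          show (Finsupp.single a3 b3 : V) = b3 • e a3 by simp [e, Finsupp.smul_single],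
          show (Finsupp.single a4 b4 : V) = b4 • e a4 by simp [e, Finsupp.smul_single],
          show (Finsupp.single a5 b5 : V) = b5 • e a5 by simp [e, Finsupp.smul_single]]
      simp only [br_smul_left, br_smul_mid, br_smul_right, smul_smul]
      rw [h a1 a2 a3 a4 a5]
      match_scalars <;> ring

set_option maxHeartbeats 2000000 in
lemma FI_basis (z : ℂ) (hz : z ^ 2 = -4) (α1 α2 α3 α4 α5 : ℤ ⊕ ℤ) :
    br z (br z (e α1) (e α2) (e α3)) (e α4) (e α5)
      = br z (br z (e α1) (e α4) (e α5)) (e α2) (e α3)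
        + br z (e α1) (br z (e α2) (e α4) (e α5)) (e α3)
        + br z (e α1) (e α2) (br z (e α3) (e α4) (e α5)) := by
  obtain k | k := α1 <;> obtain m | m := α2 <;> obtain n | n := α3 <;>
    obtain p | p := α4 <;> obtain q | q := α5
  all_goals try simp only [br_eee, br0, Qb_e, Rb_e, br_add_left, br_add_mid, br_add_right,
      br_smul_left, br_smul_mid, br_smul_right, br_neg_left, br_neg_mid, br_neg_right,
      smul_add, smul_smul, br_zero_left, br_zero_mid, br_zero_right, smul_zero,
      add_zero, zero_add, smul_neg, neg_neg]
  all_goals try simp only [e, Qb, Rb]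
  all_goals try ring_nf
  all_goals try match_scalars
  all_goals (try ring_nf; try simp only [hz]; try push_cast; try ring)

lemma z_sq_of_FI (z : ℂ)
    (h : br z (br z (e (Sum.inl (-1))) (e (Sum.inl 0)) (e (Sum.inl 1))) (e (Sum.inl 0)) (e (Sum.inr (-1)))
      = br z (br z (e (Sum.inl (-1))) (e (Sum.inl 0)) (e (Sum.inr (-1)))) (e (Sum.inl 0)) (e (Sum.inl 1))
        + br z (e (Sum.inl (-1))) (br z (e (Sum.inl 0)) (e (Sum.inl 0)) (e (Sum.inr (-1)))) (e (Sum.inl 1))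
        + br z (e (Sum.inl (-1))) (e (Sum.inl 0)) (br z (e (Sum.inl 1)) (e (Sum.inl 0)) (e (Sum.inr (-1))))) :
    z ^ 2 = -4 := by
  simp only [br_eee, br0, Qb_e, Rb_e, br_add_left, br_add_mid, br_add_right,
    br_smul_left, br_smul_mid, br_smul_right, br_neg_left, br_neg_mid, br_neg_right,
    smul_add, smul_smul, br_zero_left, br_zero_mid, br_zero_right, smul_zero,
    add_zero, zero_add, smul_neg, neg_neg] at h
  simp only [e, Qb, Rb] at h
  have h2 := DFunLike.congr_fun h (Sum.inr (-1))
  simp [Finsupp.single_apply] at h2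
  linear_combination (-1/2 : ℂ) * h2


/-- the bracket on `V` satisfies the Fundamental Identity if and
only if `z = 2√−1` or `z = −2√−1`; in these cases `(V, [·,·,·])` is the
3-Virasoro–Witt 3-Lie algebra `W₃`. -/
theorem fundamental_identity_iff (z : ℂ) :
    (∀ x1 x2 x3 y2 y3 : V,
        br z (br z x1 x2 x3) y2 y3
          = br z (br z x1 y2 y3) x2 x3 + br z x1 (br z x2 y2 y3) x3
            + br z x1 x2 (br z x3 y2 y3))
      ↔ (z = 2 * Complex.I ∨ z = -(2 * Complex.I)) := by
  constructor
  · intro h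
    have hz : z ^ 2 = -4 := z_sq_of_FI z (h _ _ _ _ _)
    have hfac : (z - 2 * Complex.I) * (z + 2 * Complex.I) = 0 := by
      linear_combination hz - 4 * Complex.I_sq
    rcases mul_eq_zero.mp hfac with h' | h'
    · left; linear_combination h'
    · right; linear_combination h'
  · intro h
    have hz : z ^ 2 = -4 := by
      rcases h with rfl | rfl <;> linear_combination (4 : ℂ) * Complex.I_sq
    exact FI_all z (FI_basis z hz)

end W3
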